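/- Let b be a prime and a an integer. If there exist rational numbers x0, x1, x2, x3, not all zero, satisfying (x0² - a·x1²) - b·(x2² - a·x3²) = 0, then a is a quadratic residue modulo b (i.e. there exists y with y² ≡ a (mod b)). -/

import Mathlib

/-- Key parity lemma: if `a` is not a square mod prime `b`, then the `b`-adic
valuation of `X² - a·Y²` is even whenever it's nonzero. -/
lemma even_padicValInt_sub (b : ℕ) (hb : b.Prime) (a : ℤ)
    (ha : ¬ IsSquare ((a : ZMod b))) :
    ∀ n : ℕ, ∀ X Y : ℤ, (X ^ 2 - a * Y ^ 2).natAbs = n →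
      X ^ 2 - a * Y ^ 2 ≠ 0 → Even (padicValInt b (X ^ 2 - a * Y ^ 2)) := by
  haveI : Fact b.Prime := ⟨hb⟩
  intro n
  induction n using Nat.strong_induction_on with
  | _ n ih =>
    intro X Y hn hne
    by_cases hdvd : (b : ℤ) ∣ X ^ 2 - a * Y ^ 2
    · -- b divides; show b ∣ X and b ∣ Y
      have hzmod : ((X : ZMod b)) ^ 2 = (a : ZMod b) * (Y : ZMod b) ^ 2 := by
        have := (ZMod.intCast_zmod_eq_zero_iff_dvd (X ^ 2 - a * Y ^ 2) b).mpr hdvd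
        push_cast at this
        linear_combination this
      have hY : (Y : ZMod b) = 0 := by
        by_contra hY
        apply ha
        refine ⟨(X : ZMod b) * (Y : ZMod b)⁻¹, ?_⟩
        have h2 : (a : ZMod b) = ((X : ZMod b) * (Y : ZMod b)⁻¹) ^ 2 := by
          field_simp
          linear_combination -hzmod
        rw [h2]; ring
      have hX : (X : ZMod b) = 0 := by
        have : ((X : ZMod b)) ^ 2 = 0 := by rw [hzmod, hY]; ring
        exact pow_eq_zero_iff (n := 2) two_ne_zero |>.mp this
      obtain ⟨X', rfl⟩ := (ZMod.intCast_zmod_eq_zero_iff_dvd X b).mp hX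
      obtain ⟨Y', rfl⟩ := (ZMod.intCast_zmod_eq_zero_iff_dvd Y b).mp hY
      have hfac : (↑b * X') ^ 2 - a * (↑b * Y') ^ 2 = (b:ℤ)^2 * (X' ^ 2 - a * Y' ^ 2) := by ring
      have hne' : X' ^ 2 - a * Y' ^ 2 ≠ 0 := by
        intro h; apply hne; rw [hfac, h, mul_zero]
      have hb2 : ((b:ℤ)^2 : ℤ) ≠ 0 := pow_ne_zero 2 (by exact_mod_cast hb.ne_zero)
      have hlt : (X' ^ 2 - a * Y' ^ 2).natAbs < n := by
        rw [← hn, hfac, Int.natAbs_mul]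
        have h1 : 1 < ((b:ℤ)^2).natAbs := by
          have := hb.two_le
          simp [Int.natAbs_pow]
          nlinarith
        calc (X' ^ 2 - a * Y' ^ 2).natAbs
            < ((b:ℤ)^2).natAbs * (X' ^ 2 - a * Y' ^ 2).natAbs := by
              have := Int.natAbs_pos.mpr hne'
              exact lt_mul_of_one_lt_left this h1
          _ = _ := rfl
      have ihv := ih _ hlt X' Y' rfl hne'
      rw [hfac, padicValInt.mul hb2 hne']
      have hbb : padicValInt b ((b:ℤ)^2) = 2 := by
        have : ((b:ℤ)^2) = ((b^2 : ℕ) : ℤ) := by push_cast; ring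
        rw [this]
        unfold padicValInt
        rw [Int.natAbs_natCast]
        exact padicValNat.prime_pow 2
      rw [hbb]
      obtain ⟨k, hk⟩ := ihv
      exact ⟨1 + k, by omega⟩
    · rw [padicValInt.eq_zero_of_not_dvd hdvd]; exact Even.zero
/-- If `X² = a·Y²` in ℤ with `Y ≠ 0`, then `a` is a perfect square in ℤ. -/
lemma isSquare_of_sq_eq (a X Y : ℤ) (hY : Y ≠ 0) (h : X ^ 2 - a * Y ^ 2 = 0) :
    IsSquare a := by
  have hdvd : Y ∣ X := (Int.pow_dvd_pow_iff two_ne_zero).mp ⟨a, by linarith⟩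
  obtain ⟨c, rfl⟩ := hdvd
  refine ⟨c, ?_⟩
  have hY2 : Y ^ 2 ≠ 0 := pow_ne_zero 2 hY
  have : Y ^ 2 * (c * c) = Y ^ 2 * a := by ring_nf; ring_nf at h; linarith
  exact (mul_left_cancel₀ hY2 this).symm

/-- If the quaternary form (x0² - a x1²) - b(x2² - a x3²) has a nontrivial
rational zero, with b prime, then a is a quadratic residue mod b. -/
theorem quaternion_zero_divisor_implies_square
    (b : ℕ) (hb : b.Prime) (a : ℤ)
    (x0 x1 x2 x3 : ℚ)
    (hnz : ¬ (x0 = 0 ∧ x1 = 0 ∧ x2 = 0 ∧ x3 = 0))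
    (heq : (x0 ^ 2 - (a : ℚ) * x1 ^ 2) - (b : ℚ) * (x2 ^ 2 - (a : ℚ) * x3 ^ 2) = 0) :
    IsSquare ((a : ZMod b)) := by
  haveI : Fact b.Prime := ⟨hb⟩
  by_contra ha
  -- clear denominators
  set d : ℚ := (x0.den : ℚ) * x1.den * x2.den * x3.den with hd
  have hden : ∀ q : ℚ, (q.den : ℚ) ≠ 0 := fun q => Nat.cast_ne_zero.mpr q.den_nz
  have hdne : d ≠ 0 := by
    simp only [hd]
    exact mul_ne_zero (mul_ne_zero (mul_ne_zero (hden x0) (hden x1)) (hden x2)) (hden x3)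
  obtain ⟨X0, hX0⟩ : ∃ X : ℤ, (X : ℚ) = x0 * d := by
    refine ⟨x0.num * x1.den * x2.den * x3.den, ?_⟩
    push_cast; rw [hd, ← Rat.mul_den_eq_num]; ring
  obtain ⟨X1, hX1⟩ : ∃ X : ℤ, (X : ℚ) = x1 * d := by
    refine ⟨x1.num * x0.den * x2.den * x3.den, ?_⟩
    push_cast; rw [← Rat.mul_den_eq_num]; ring
  obtain ⟨X2, hX2⟩ : ∃ X : ℤ, (X : ℚ) = x2 * d := by
    refine ⟨x2.num * x0.den * x1.den * x3.den, ?_⟩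
    push_cast; rw [← Rat.mul_den_eq_num]; ring
  obtain ⟨X3, hX3⟩ : ∃ X : ℤ, (X : ℚ) = x3 * d := by
    refine ⟨x3.num * x0.den * x1.den * x2.den, ?_⟩
    push_cast; rw [← Rat.mul_den_eq_num]; ring
  have hE : X0 ^ 2 - a * X1 ^ 2 = b * (X2 ^ 2 - a * X3 ^ 2) := by
    have h2 : ((X0 ^ 2 - a * X1 ^ 2 : ℤ) : ℚ) = ((b * (X2 ^ 2 - a * X3 ^ 2) : ℤ) : ℚ) := by
      push_cast
      rw [hX0, hX1, hX2, hX3]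
      linear_combination d ^ 2 * heq
    exact_mod_cast h2
  have hzero : ∀ (X : ℤ) (x : ℚ), (X : ℚ) = x * d → X = 0 → x = 0 := by
    intro X x hXx h0
    rw [h0] at hXx
    field_simp at hXx
    rcases mul_eq_zero.mp (by simpa using hXx.symm : x * d = 0) with h | h
    · exact h
    · exact absurd h hdne
  by_cases hL : X0 ^ 2 - a * X1 ^ 2 = 0
  · by_cases hX1z : X1 = 0
    · have hX0z : X0 = 0 := by
        rw [hX1z] at hL
        have : X0 ^ 2 = 0 := by linarith
        exact pow_eq_zero_iff two_ne_zero |>.mp this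
      have hR : X2 ^ 2 - a * X3 ^ 2 = 0 := by
        rw [hL] at hE
        have hbz : (b : ℤ) ≠ 0 := by exact_mod_cast hb.ne_zero
        exact (mul_eq_zero.mp hE.symm).resolve_left hbz
      by_cases hX3z : X3 = 0
      · have hX2z : X2 = 0 := by
          rw [hX3z] at hR
          have : X2 ^ 2 = 0 := by linarith
          exact pow_eq_zero_iff two_ne_zero |>.mp this
        exact hnz ⟨hzero _ _ hX0 hX0z, hzero _ _ hX1 hX1z,
          hzero _ _ hX2 hX2z, hzero _ _ hX3 hX3z⟩
      · obtain ⟨c, hc⟩ := isSquare_of_sq_eq a X2 X3 hX3z hR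
        exact ha ⟨(c : ZMod b), by rw [hc]; push_cast; ring⟩
    · obtain ⟨c, hc⟩ := isSquare_of_sq_eq a X0 X1 hX1z hL
      exact ha ⟨(c : ZMod b), by rw [hc]; push_cast; ring⟩
  · -- valuation parity contradiction
    have hRne : X2 ^ 2 - a * X3 ^ 2 ≠ 0 := by
      intro h; apply hL; rw [hE, h, mul_zero]
    have hLeven := even_padicValInt_sub b hb a ha _ X0 X1 rfl hL
    have hReven := even_padicValInt_sub b hb a ha _ X2 X3 rfl hRne
    have hbz : (b : ℤ) ≠ 0 := by exact_mod_cast hb.ne_zero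
    rw [hE, padicValInt.mul hbz hRne, padicValInt.self hb.one_lt] at hLeven
    obtain ⟨k, hk⟩ := hReven
    obtain ⟨m, hm⟩ := hLeven
    omega
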